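/- Let u ∈ M₂(ℂ) be a symmetric unitary matrix (u* u = 1 and uᵀ = u). Then there exist complex numbers c₁, c₂, d₁, d₂ of modulus 1 with c₁·d₂ = c₂·d₁ and t ∈ ℝ with 0 ≤ t ≤ 1 such that u = diag(conj(c₁), conj(c₂)) · [[t, √(1−t²)], [√(1−t²), −t]] · diag(conj(d₁), conj(d₂)). -/

import Mathlib

lemma exists_sqrt_unit (w : ℂ) (hw : ‖w‖ = 1) :
    ∃ z : ℂ, ‖z‖ = 1 ∧ z ^ 2 = w := by
  have hw0 : w ≠ 0 := by intro h; simp [h] at hw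
  refine ⟨Complex.exp (Complex.log w / 2), ?_, ?_⟩
  · rw [Complex.norm_exp]
    have : (Complex.log w / 2).re = Real.log ‖w‖ / 2 := by
      rw [Complex.div_re]; simp [Complex.log_re]; ring
    rw [this, hw, Real.log_one]; simp
  · rw [← Complex.exp_nat_mul]
    have : (2 : ℕ) * (Complex.log w / 2) = Complex.log w := by push_cast; ring
    rw [this, Complex.exp_log hw0]

theorem stmt15 (u : Matrix (Fin 2) (Fin 2) ℂ)
    (hu : u.conjTranspose * u = 1) (hsymm : u.transpose = u) :
    ∃ (c₁ c₂ d₁ d₂ : ℂ) (t : ℝ),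
      ‖c₁‖ = 1 ∧ ‖c₂‖ = 1 ∧
      ‖d₁‖ = 1 ∧ ‖d₂‖ = 1 ∧ c₁ * d₂ = c₂ * d₁ ∧
      0 ≤ t ∧ t ≤ 1 ∧
      u = Matrix.diagonal ![(starRingEnd ℂ) c₁, (starRingEnd ℂ) c₂] *
          !![(t : ℂ), (Real.sqrt (1 - t ^ 2) : ℂ);
             (Real.sqrt (1 - t ^ 2) : ℂ), -(t : ℂ)] *
          Matrix.diagonal ![(starRingEnd ℂ) d₁, (starRingEnd ℂ) d₂] := by
  have hb : u 1 0 = u 0 1 := by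
    conv_rhs => rw [← hsymm]; rw [Matrix.transpose_apply]
  have h00 : (u.conjTranspose * u) 0 0 = (1 : Matrix (Fin 2) (Fin 2) ℂ) 0 0 := by rw [hu]
  have h01 : (u.conjTranspose * u) 0 1 = (1 : Matrix (Fin 2) (Fin 2) ℂ) 0 1 := by rw [hu]
  have h11 : (u.conjTranspose * u) 1 1 = (1 : Matrix (Fin 2) (Fin 2) ℂ) 1 1 := by rw [hu]
  simp [Matrix.mul_apply, Fin.sum_univ_two, Matrix.one_apply, Matrix.conjTranspose_apply,
    hb] at h00 h01 h11
  set a := u 0 0 with ha'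
  set b := u 0 1 with hb'
  set d := u 1 1 with hd'
  set na := ‖a‖ with hna'
  set nb := ‖b‖ with hnb'
  set nd := ‖d‖ with hnd'
  have hca : (starRingEnd ℂ) a * a = ((na : ℂ))^2 := by
    rw [mul_comm, Complex.mul_conj, Complex.normSq_eq_norm_sq]; push_cast; ring
  have hcb : (starRingEnd ℂ) b * b = ((nb : ℂ))^2 := by
    rw [mul_comm, Complex.mul_conj, Complex.normSq_eq_norm_sq]; push_cast; ring
  have hcd : (starRingEnd ℂ) d * d = ((nd : ℂ))^2 := by
    rw [mul_comm, Complex.mul_conj, Complex.normSq_eq_norm_sq]; push_cast; ring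
  have hab : na^2 + nb^2 = 1 := by
    have := h00; rw [hca, hcb] at this; exact_mod_cast this
  have hbd : nb^2 + nd^2 = 1 := by
    have := h11; rw [hcb, hcd] at this; exact_mod_cast this
  have hna0 : 0 ≤ na := norm_nonneg a
  have hnb0 : 0 ≤ nb := norm_nonneg b
  have hnd0 : 0 ≤ nd := norm_nonneg d
  have hsq : Real.sqrt (1 - na^2) = nb := by
    rw [show 1 - na^2 = nb^2 by linarith, Real.sqrt_sq hnb0]
  have hna1 : na ≤ 1 := by nlinarith
  clear_value a b d na nb nd
  by_cases hbz : b = 0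
  · -- b = 0 : u diagonal, na = nd = 1
    have hnb : nb = 0 := by rw [hnb', hbz]; simp
    have hna : na = 1 := by nlinarith
    have hnd : nd = 1 := by nlinarith
    have habs : ‖(-(d * (starRingEnd ℂ) a))‖ = 1 := by
      simp [← hnd', ← hna', hnd, hna]
    obtain ⟨z, hz1, hz2⟩ := exists_sqrt_unit _ habs
    refine ⟨1, (starRingEnd ℂ) z, (starRingEnd ℂ) a, (starRingEnd ℂ) z * (starRingEnd ℂ) a, 1,
      by simp, by simp [hz1], by simp [← hna', hna], by simp [hz1, ← hna', hna], by ring,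
      by norm_num, le_refl 1, ?_⟩
    have hca1 : (starRingEnd ℂ) a * a = 1 := by
      rw [hca, hna]; norm_num
    ext i j
    fin_cases i <;> fin_cases j <;>
      simp [Matrix.mul_apply, Fin.sum_univ_two, Matrix.diagonal, hb, ← ha', ← hb', ← hd', hbz]
    linear_combination a * hz2 - d * hca1
  · have hnbz : nb ≠ 0 := fun h => hbz (by rwa [hnb', norm_eq_zero] at h)
    by_cases haz : a = 0
    · -- a = 0 : antidiagonal, nb = 1, d = 0
      have hna : na = 0 := by rw [hna', haz]; simp
      have hnb : nb = 1 := by nlinarith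
      have hdz : d = 0 := by
        have : nd = 0 := by nlinarith
        rwa [hnd', norm_eq_zero] at this
      refine ⟨1, (starRingEnd ℂ) b, 1, (starRingEnd ℂ) b, 0,
        by simp, by simp [← hnb', hnb], by simp, by simp [← hnb', hnb], by ring,
        le_refl 0, by norm_num, ?_⟩
      ext i j
      fin_cases i <;> fin_cases j <;>
        simp [Matrix.mul_apply, Fin.sum_univ_two, Matrix.diagonal, hb, ← ha', ← hb', ← hd',
          haz, hdz]
    · -- generic case
      have hnaz : na ≠ 0 := fun h => haz (by rwa [hna', norm_eq_zero] at h)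
      have hnac : (na : ℂ) ≠ 0 := by exact_mod_cast hnaz
      have hnbc : (nb : ℂ) ≠ 0 := by exact_mod_cast hnbz
      refine ⟨1, (starRingEnd ℂ) b * a / (nb * na), (starRingEnd ℂ) a / na,
        (starRingEnd ℂ) b / nb, na,
        by simp, ?_, ?_, ?_, ?_, hna0, hna1, ?_⟩
      · simp [map_mul, map_div₀, ← hna', ← hnb', abs_of_nonneg hna0, abs_of_nonneg hnb0]
        exact ⟨hnbz, hnaz⟩
      · simp [map_div₀, ← hna', abs_of_nonneg hna0]; exact hnaz
      · simp [map_div₀, ← hnb', abs_of_nonneg hnb0]; exact hnbz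
      · field_simp
        linear_combination (-((starRingEnd ℂ) b)) * hca
      · ext i j
        fin_cases i <;> fin_cases j <;>
          simp [Matrix.mul_apply, Fin.sum_univ_two, Matrix.diagonal, hb, ← ha', ← hb', ← hd', hsq]
        · field_simp [hnac, hnbc]
        · field_simp [hnac, hnbc]
        · field_simp [hnac, hnbc]
          linear_combination (-1 : ℂ) * hca
        · field_simp [hnac, hnbc]
          linear_combination b * h01 - d * hcb
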